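/- If X is a locally Lindelöf, c-well-filtered P-space, then the poset (LQ(X), ⊇) of saturated Lindelöf subsets ordered by reverse inclusion is a countably approximating poset. -/
import Mathlib

universe u

/-- A set is saturated if it equals the intersection of its open neighbourhoods. -/
def IsSaturatedSet {X : Type u} [TopologicalSpace X] (A : Set X) : Prop :=
  A = ⋂₀ {U : Set X | IsOpen U ∧ A ⊆ U}

/-- A family of sets is countably filtered (under `⊆`) if every countable subfamily
has a lower bound in the family. -/
def CntFilteredFam {X : Type u} (S : Set (Set X)) : Prop :=
  ∀ T ⊆ S, T.Countable → ∃ L ∈ S, ∀ t ∈ T, L ⊆ t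

/-- A family of sets is countably directed (under `⊆`) if every countable subfamily
has an upper bound in the family. -/
def CntDirectedFam {X : Type u} (S : Set (Set X)) : Prop :=
  ∀ T ⊆ S, T.Countable → ∃ U ∈ S, ∀ t ∈ T, t ⊆ U

/-- A space is c-well-filtered if for every countably filtered family of saturated
Lindelöf subsets whose intersection is contained in an open `U`, some member is contained in `U`. -/
def CWellFiltered (X : Type u) [TopologicalSpace X] : Prop :=
  ∀ S : Set (Set X), (∀ K ∈ S, IsSaturatedSet K ∧ IsLindelof K) →
    CntFilteredFam S → ∀ U : Set X, IsOpen U → ⋂₀ S ⊆ U → ∃ K ∈ S, K ⊆ U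

/-- A subset `D` is countably directed w.r.t. `le` if every countable subset of `D`
has an upper bound in `D`. -/
def CntDirected {α : Type u} (le : α → α → Prop) (D : Set α) : Prop :=
  ∀ E ⊆ D, E.Countable → ∃ d ∈ D, ∀ e ∈ E, le e d

/-- `a` is a least upper bound of `D` w.r.t. `le`. -/
def RIsLUB {α : Type u} (le : α → α → Prop) (D : Set α) (a : α) : Prop :=
  (∀ d ∈ D, le d a) ∧ ∀ b, (∀ d ∈ D, le d b) → le a b

/-- Countably directed complete: every countably directed subset has a least upper bound. -/
def CDComplete {α : Type u} (le : α → α → Prop) : Prop :=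
  ∀ D : Set α, CntDirected le D → ∃ a, RIsLUB le D a

/-- `x` is countably way-below `y`. -/
def CWayBelow {α : Type u} (le : α → α → Prop) (x y : α) : Prop :=
  ∀ D : Set α, CntDirected le D → ∀ a, RIsLUB le D a → le y a → ∃ d ∈ D, le x d

/-- `U` is σ-Scott open: an upper set meeting every countably directed set whose sup lies in `U`. -/
def SigmaScottOpenRel {α : Type u} (le : α → α → Prop) (U : Set α) : Prop :=
  (∀ x ∈ U, ∀ y, le x y → y ∈ U) ∧
  ∀ D : Set α, CntDirected le D → ∀ a, RIsLUB le D a → a ∈ U → ∃ d ∈ D, d ∈ U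

/-- `F` is countably filtered w.r.t. `le`: every countable subset has a lower bound in `F`. -/
def CntFilteredRel {α : Type u} (le : α → α → Prop) (F : Set α) : Prop :=
  ∀ E ⊆ F, E.Countable → ∃ l ∈ F, ∀ e ∈ E, le l e

/-- Countably approximating: countably directed complete and each `x` is the sup of
the countably directed set of elements countably way-below `x`. -/
def CntApprox {α : Type u} (le : α → α → Prop) : Prop :=
  CDComplete le ∧
    ∀ x, CntDirected le {y | CWayBelow le y x} ∧ RIsLUB le {y | CWayBelow le y x} x

/-- `B` is a σ-basis: for each `x`, `B ∩ ⇓꜀x` is countably directed with sup `x`. -/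
def IsSigmaBasis {α : Type u} (le : α → α → Prop) (B : Set α) : Prop :=
  ∀ x, CntDirected le (B ∩ {y | CWayBelow le y x}) ∧
    RIsLUB le (B ∩ {y | CWayBelow le y x}) x

/-- A P-space: every countable intersection of open sets is open. -/
def PSpace (X : Type u) [TopologicalSpace X] : Prop :=
  ∀ 𝒰 : Set (Set X), 𝒰.Countable → (∀ U ∈ 𝒰, IsOpen U) → IsOpen (⋂₀ 𝒰)

/-- Locally Lindelöf: every open neighbourhood contains a saturated Lindelöf
neighbourhood. -/
def LocallyLindelofSp (X : Type u) [TopologicalSpace X] : Prop :=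
  ∀ U : Set X, IsOpen U → ∀ x ∈ U, ∃ K : Set X,
    IsSaturatedSet K ∧ IsLindelof K ∧ x ∈ interior K ∧ K ⊆ U

/-- The saturated Lindelöf subsets of `X`. -/
def LQ (X : Type u) [TopologicalSpace X] : Type u :=
  {K : Set X // IsSaturatedSet K ∧ IsLindelof K}

/-- The order of `(LQ(X), ⊇)`: reverse inclusion. -/
def lqLe {X : Type u} [TopologicalSpace X] (A B : LQ X) : Prop := B.1 ⊆ A.1

section Aux

variable {X : Type u} [TopologicalSpace X]

lemma mem_sat {A : Set X} (hA : IsSaturatedSet A) {x : X}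
    (h : ∀ U : Set X, IsOpen U → A ⊆ U → x ∈ U) : x ∈ A := by
  rw [hA]
  exact fun U hU => h U hU.1 hU.2

lemma sat_sUnion {S : Set (Set X)} (h : ∀ A ∈ S, IsSaturatedSet A) :
    IsSaturatedSet (⋃₀ S) := by
  apply subset_antisymm
  · exact fun x hx U hU => hU.2 hx
  · intro x hx
    by_contra hxn
    have hch : ∀ A ∈ S, ∃ U : Set X, IsOpen U ∧ A ⊆ U ∧ x ∉ U := by
      intro A hA
      have hxA : x ∉ A := fun hxA => hxn ⟨A, hA, hxA⟩
      rw [h A hA] at hxA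
      simp only [Set.mem_sInter, Set.mem_setOf_eq, not_forall] at hxA
      obtain ⟨U, hU, hxU⟩ := hxA
      exact ⟨U, hU.1, hU.2, hxU⟩
    choose f hf using hch
    have hopen : IsOpen (⋃ A ∈ S, ⋃ (hA : A ∈ S), f A hA) := by
      apply isOpen_biUnion; intro A hA; apply isOpen_iUnion; intro hA'
      exact (hf A hA').1
    have : x ∈ ⋃ A ∈ S, ⋃ (hA : A ∈ S), f A hA := by
      apply hx
      refine ⟨hopen, ?_⟩
      intro y hy
      obtain ⟨A, hA, hyA⟩ := hy
      exact Set.mem_biUnion hA (Set.mem_iUnion.2 ⟨hA, (hf A hA).2.1 hyA⟩)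
    simp only [Set.mem_iUnion] at this
    obtain ⟨A, hA, hA', hxf⟩ := this
    exact (hf A hA').2.2 hxf

lemma sat_sInter {S : Set (Set X)} (h : ∀ A ∈ S, IsSaturatedSet A) :
    IsSaturatedSet (⋂₀ S) := by
  apply subset_antisymm
  · exact fun x hx U hU => hU.2 hx
  · intro x hx A hA
    apply mem_sat (h A hA)
    intro U hU hAU
    exact hx U ⟨hU, fun y hy => hAU (hy A hA)⟩

/-- Key construction: a saturated Lindelöf neighbourhood of `K` inside `W`. -/
lemma nbhd (hLL : LocallyLindelofSp X) {K W : Set X} (hK : IsLindelof K)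
    (hW : IsOpen W) (hKW : K ⊆ W) :
    ∃ L : Set X, IsSaturatedSet L ∧ IsLindelof L ∧ K ⊆ interior L ∧ L ⊆ W := by
  have hch : ∀ x : K, ∃ L : Set X,
      IsSaturatedSet L ∧ IsLindelof L ∧ (x : X) ∈ interior L ∧ L ⊆ W :=
    fun x => hLL W hW x (hKW x.2)
  choose f hf using hch
  obtain ⟨r, hrc, hrcov⟩ := hK.elim_countable_subcover (fun x : K => interior (f x))
    (fun _ => isOpen_interior)
    (fun x hx => Set.mem_iUnion_of_mem ⟨x, hx⟩ (hf ⟨x, hx⟩).2.2.1)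
  refine ⟨⋃₀ (f '' r), ?_, ?_, ?_, ?_⟩
  · apply sat_sUnion
    rintro A ⟨x, _, rfl⟩
    exact (hf x).1
  · exact (hrc.image f).isLindelof_sUnion (by rintro A ⟨x, _, rfl⟩; exact (hf x).2.1)
  · intro x hx
    have := hrcov hx
    simp only [Set.mem_iUnion] at this
    obtain ⟨i, hi, hxi⟩ := this
    exact interior_mono (Set.subset_sUnion_of_mem (Set.mem_image_of_mem f hi)) hxi
  · rintro y ⟨A, ⟨x, _, rfl⟩, hyA⟩
    exact (hf x).2.2.2 hyA

/-- The family of values of a countably directed subset of `LQ X` is countably filtered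
and consists of saturated Lindelöf sets. -/
lemma val_filtered {D : Set (LQ X)} (hD : CntDirected (lqLe (X := X)) D) :
    CntFilteredFam (Subtype.val '' D) := by
  intro T hT hTc
  have hch : ∀ t : T, ∃ d : LQ X, d ∈ D ∧ d.1 = (t : Set X) := by
    intro t
    obtain ⟨d, hd, hdt⟩ := hT t.2
    exact ⟨d, hd, hdt⟩
  choose g hg using hch
  obtain ⟨d, hdD, hdub⟩ := hD (Set.range g) (by rintro _ ⟨t, rfl⟩; exact (hg t).1)
    (have := hTc.to_subtype; Set.countable_range g)
  refine ⟨d.1, ⟨d, hdD, rfl⟩, ?_⟩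
  intro t ht
  have h1 := hdub (g ⟨t, ht⟩) ⟨⟨t, ht⟩, rfl⟩
  have h2 : (g ⟨t, ht⟩).1 = t := (hg ⟨t, ht⟩).2
  exact h2 ▸ h1

/-- The intersection of a countably directed family in `LQ X` is its least upper bound. -/
lemma inter_lub (hW : CWellFiltered X) {D : Set (LQ X)}
    (hD : CntDirected (lqLe (X := X)) D) :
    ∃ m : LQ X, m.1 = ⋂₀ (Subtype.val '' D) ∧ RIsLUB (lqLe (X := X)) D m := by
  have hprops : ∀ A ∈ Subtype.val '' D, IsSaturatedSet A ∧ IsLindelof A := by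
    rintro _ ⟨d, _, rfl⟩; exact d.2
  have hfil := val_filtered hD
  have hsat : IsSaturatedSet (⋂₀ (Subtype.val '' D)) :=
    sat_sInter (fun A hA => (hprops A hA).1)
  have hlin : IsLindelof (⋂₀ (Subtype.val '' D)) := by
    rw [isLindelof_iff_countable_subcover]
    intro ι U hUo hsub
    obtain ⟨A, hAD, hAU⟩ := hW (Subtype.val '' D) hprops hfil (⋃ i, U i)
      (isOpen_iUnion hUo) hsub
    obtain ⟨r, hrc, hrcov⟩ := (hprops A hAD).2.elim_countable_subcover U hUo hAU
    exact ⟨r, hrc, (Set.sInter_subset_of_mem hAD).trans hrcov⟩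
  refine ⟨⟨⋂₀ (Subtype.val '' D), hsat, hlin⟩, rfl, ?_, ?_⟩
  · intro d hd
    exact Set.sInter_subset_of_mem ⟨d, hd, rfl⟩
  · intro b hb
    intro x hx
    rintro _ ⟨d, hd, rfl⟩
    exact hb d hd hx

end Aux

/-- if `X` is a locally Lindelöf, c-well-filtered P-space, then
`(LQ(X), ⊇)` is a countably approximating poset. -/
theorem stmt18 {X : Type u} [TopologicalSpace X] (hLL : LocallyLindelofSp X)
    (hW : CWellFiltered X) (hP : PSpace X) :
    CntApprox (lqLe (X := X)) := by
  constructor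
  · intro D hD
    obtain ⟨m, _, hm⟩ := inter_lub hW hD
    exact ⟨m, hm⟩
  · intro K
    set N : Set (LQ X) := {Q | K.1 ⊆ interior Q.1} with hN
    -- N is countably directed
    have hNdir : CntDirected (lqLe (X := X)) N := by
      intro E hE hEc
      set 𝒰 : Set (Set X) := (fun Q : LQ X => interior Q.1) '' E with h𝒰
      have hWopen : IsOpen (⋂₀ 𝒰) := hP 𝒰 (hEc.image _) (by rintro _ ⟨Q, _, rfl⟩; exact isOpen_interior)
      have hKW : K.1 ⊆ ⋂₀ 𝒰 := by
        intro x hx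
        rintro _ ⟨Q, hQ, rfl⟩
        exact hE hQ hx
      obtain ⟨L, hLs, hLl, hKL, hLW⟩ := nbhd hLL K.2.2 hWopen hKW
      refine ⟨⟨L, hLs, hLl⟩, hKL, ?_⟩
      intro e he
      exact fun x hx => interior_subset (hLW hx _ (Set.mem_image_of_mem _ he))
    -- K is the LUB of N
    have hNlub : RIsLUB (lqLe (X := X)) N K := by
      constructor
      · intro Q hQ
        exact fun x hx => interior_subset (hQ hx)
      · intro b hb x hx
        apply mem_sat K.2.1
        intro U hU hKU
        obtain ⟨L, hLs, hLl, hKL, hLU⟩ := nbhd hLL K.2.2 hU hKU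
        exact hLU (hb ⟨L, hLs, hLl⟩ hKL hx)
    -- N ⊆ ⇓K
    have hN_wb : ∀ Q ∈ N, CWayBelow (lqLe (X := X)) Q K := by
      intro Q hQ D hD a ha hKa
      obtain ⟨m, hm1, hm2⟩ := inter_lub hW hD
      have hma : m.1 ⊆ a.1 := ha.2 m hm2.1
      have hsub : ⋂₀ (Subtype.val '' D) ⊆ interior Q.1 := by
        rw [← hm1]
        exact (hma.trans hKa).trans hQ
      obtain ⟨A, hAD, hAQ⟩ := hW (Subtype.val '' D)
        (by rintro _ ⟨d, _, rfl⟩; exact d.2) (val_filtered hD)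
        (interior Q.1) isOpen_interior hsub
      obtain ⟨d, hd, rfl⟩ := hAD
      exact ⟨d, hd, hAQ.trans interior_subset⟩
    -- ⇓K ⊆ N
    have hwb_N : ∀ Q : LQ X, CWayBelow (lqLe (X := X)) Q K → Q ∈ N := by
      intro Q hQ
      obtain ⟨L, hL, hLQ⟩ := hQ N hNdir K hNlub (fun _ h => h)
      exact hL.trans (interior_mono hLQ)
    have hEq : {y : LQ X | CWayBelow (lqLe (X := X)) y K} = N :=
      Set.ext fun Q => ⟨fun h => hwb_N Q h, fun h => hN_wb Q h⟩
    rw [hEq]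
    exact ⟨hNdir, hNlub⟩
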